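/- The Legendre transformation maps the minimal surface equation to the linear equation: if u(x,y) is a C² solution of (1 + u_y²)u_xx − 2u_x u_y u_xy + (1 + u_x²)u_yy = 0 on an open set where the Hessian of u is invertible, and φ is defined by φ(p,q) = x·u_x + y·u_y − u with p = u_x(x,y), q = u_y(x,y), then φ satisfies (1 + p²)φ_pp + 2pq·φ_pq + (1 + q²)φ_qq = 0 on the image of the gradient map. -/

import Mathlib

open Topology Filter

noncomputable def pd₁ (f : ℝ → ℝ → ℝ) : ℝ → ℝ → ℝ := fun p q => deriv (fun x => f x q) p
noncomputable def pd₂ (f : ℝ → ℝ → ℝ) : ℝ → ℝ → ℝ := fun p q => deriv (fun y => f p y) q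

private lemma derivSection1 {F : ℝ × ℝ → ℝ} {a b : ℝ} (h : DifferentiableAt ℝ F (a, b)) :
    deriv (fun x => F (x, b)) a = fderiv ℝ F (a, b) (1, 0) := by
  have h1 : HasDerivAt (fun x : ℝ => (x, b)) ((1 : ℝ), (0 : ℝ)) a :=
    (hasDerivAt_id a).prodMk (hasDerivAt_const a b)
  exact (h.hasFDerivAt.comp_hasDerivAt a h1).deriv

private lemma derivSection2 {F : ℝ × ℝ → ℝ} {a b : ℝ} (h : DifferentiableAt ℝ F (a, b)) :
    deriv (fun y => F (a, y)) b = fderiv ℝ F (a, b) (0, 1) := by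
  have h1 : HasDerivAt (fun y : ℝ => (a, y)) ((0 : ℝ), (1 : ℝ)) b :=
    (hasDerivAt_const b a).prodMk (hasDerivAt_id b)
  exact (h.hasFDerivAt.comp_hasDerivAt b h1).deriv

private lemma clm_eval (L : (ℝ × ℝ) →L[ℝ] ℝ) (v : ℝ × ℝ) :
    L v = v.1 * L (1, 0) + v.2 * L (0, 1) := by
  have hv : v = v.1 • ((1:ℝ), (0:ℝ)) + v.2 • ((0:ℝ), (1:ℝ)) := by
    simp [Prod.ext_iff]
  rw [hv, map_add, map_smul, map_smul, smul_eq_mul, smul_eq_mul]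
  simp

private def mk2 (A B C D : ℝ) : (ℝ × ℝ) →ₗ[ℝ] (ℝ × ℝ) where
  toFun v := (A * v.1 + B * v.2, C * v.1 + D * v.2)
  map_add' v w := by simp [Prod.ext_iff]; constructor <;> ring
  map_smul' c v := by simp [Prod.ext_iff, smul_eq_mul]; constructor <;> ring

private noncomputable def e2 (A B C D : ℝ) (h : A * D - B * C ≠ 0) : (ℝ × ℝ) ≃L[ℝ] (ℝ × ℝ) :=
  (LinearEquiv.ofLinear (mk2 A B C D)
    (mk2 (D / (A*D - B*C)) (-B / (A*D - B*C)) (-C / (A*D - B*C)) (A / (A*D - B*C)))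
    (by
      apply LinearMap.ext; intro v
      simp [mk2, Prod.ext_iff]
      have h5 : D * A - C * B ≠ 0 := by intro e; apply h; linarith
      constructor <;> (field_simp; ring))
    (by
      apply LinearMap.ext; intro v
      simp [mk2, Prod.ext_iff]
      have h5 : D * A - C * B ≠ 0 := by intro e; apply h; linarith
      have h6 : A * D - C * B ≠ 0 := by intro e; apply h; linarith
      have h7 : D * A - B * C ≠ 0 := by intro e; apply h; linarith
      constructor <;> (field_simp; ring))).toContinuousLinearEquiv

private lemma e2_apply (A B C D : ℝ) (h : A * D - B * C ≠ 0) (v : ℝ × ℝ) :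
    e2 A B C D h v = (A * v.1 + B * v.2, C * v.1 + D * v.2) := rfl

theorem legendre_transform_linearizes
    (s : Set (ℝ × ℝ)) (hs : IsOpen s)
    (u : ℝ → ℝ → ℝ) (hu : ContDiffOn ℝ 2 (fun z : ℝ × ℝ => u z.1 z.2) s)
    (hPDE : ∀ z ∈ s,
      (1 + pd₂ u z.1 z.2 ^ 2) * pd₁ (pd₁ u) z.1 z.2
        - 2 * pd₁ u z.1 z.2 * pd₂ u z.1 z.2 * pd₁ (pd₂ u) z.1 z.2
        + (1 + pd₁ u z.1 z.2 ^ 2) * pd₂ (pd₂ u) z.1 z.2 = 0)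
    (hHess : ∀ z ∈ s,
      pd₁ (pd₁ u) z.1 z.2 * pd₂ (pd₂ u) z.1 z.2
        - pd₁ (pd₂ u) z.1 z.2 * pd₂ (pd₁ u) z.1 z.2 ≠ 0)
    (g : ℝ × ℝ → ℝ × ℝ) (hg : g = fun z => (pd₁ u z.1 z.2, pd₂ u z.1 z.2))
    (hgdiff : Set.InjOn g s)
    (φ : ℝ → ℝ → ℝ) (hφ : ContDiffOn ℝ 2 (fun w : ℝ × ℝ => φ w.1 w.2) (g '' s))
    (hdef : ∀ z ∈ s,
      φ (pd₁ u z.1 z.2) (pd₂ u z.1 z.2)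
        = z.1 * pd₁ u z.1 z.2 + z.2 * pd₂ u z.1 z.2 - u z.1 z.2) :
    ∀ w ∈ g '' s,
      (1 + w.1 ^ 2) * pd₁ (pd₁ φ) w.1 w.2
        + 2 * w.1 * w.2 * pd₁ (pd₂ φ) w.1 w.2
        + (1 + w.2 ^ 2) * pd₂ (pd₂ φ) w.1 w.2 = 0 := by
  set U : ℝ × ℝ → ℝ := fun z => u z.1 z.2 with hUdef
  set Φ : ℝ × ℝ → ℝ := fun w => φ w.1 w.2 with hΦdef
  have hUcd : ∀ z ∈ s, ContDiffAt ℝ 2 U z := fun z hz => hu.contDiffAt (hs.mem_nhds hz)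
  have hUd : ∀ z ∈ s, DifferentiableAt ℝ U z := fun z hz =>
    (hUcd z hz).differentiableAt (by norm_num)
  have hU1 : ∀ z ∈ s, ContDiffAt ℝ 1 (fderiv ℝ U) z := fun z hz =>
    (hu.fderiv_of_isOpen hs (by norm_num)).contDiffAt (hs.mem_nhds hz)
  set Fp : ℝ × ℝ → ℝ := fun z => fderiv ℝ U z (1, 0) with hFpdef
  set Fq : ℝ × ℝ → ℝ := fun z => fderiv ℝ U z (0, 1) with hFqdef
  have hFpcd : ∀ z ∈ s, ContDiffAt ℝ 1 Fp z := by
    intro z hz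
    have := ((ContinuousLinearMap.apply ℝ ℝ ((1:ℝ),(0:ℝ))).contDiff.contDiffAt).comp z
      (hU1 z hz)
    exact this.congr_of_eventuallyEq (Filter.Eventually.of_forall fun w => rfl)
  have hFqcd : ∀ z ∈ s, ContDiffAt ℝ 1 Fq z := by
    intro z hz
    have := ((ContinuousLinearMap.apply ℝ ℝ ((0:ℝ),(1:ℝ))).contDiff.contDiffAt).comp z
      (hU1 z hz)
    exact this.congr_of_eventuallyEq (Filter.Eventually.of_forall fun w => rfl)
  have hFpd : ∀ z ∈ s, DifferentiableAt ℝ Fp z := fun z hz =>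
    (hFpcd z hz).differentiableAt one_ne_zero
  have hFqd : ∀ z ∈ s, DifferentiableAt ℝ Fq z := fun z hz =>
    (hFqcd z hz).differentiableAt one_ne_zero
  have hp1 : ∀ z ∈ s, pd₁ u z.1 z.2 = Fp z := by
    intro z hz
    have h := derivSection1 (F := U) (a := z.1) (b := z.2)
      (by rw [Prod.mk.eta]; exact hUd z hz)
    rw [Prod.mk.eta] at h
    simpa [pd₁, hUdef, hFpdef] using h
  have hp2 : ∀ z ∈ s, pd₂ u z.1 z.2 = Fq z := by
    intro z hz
    have h := derivSection2 (F := U) (a := z.1) (b := z.2)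
      (by rw [Prod.mk.eta]; exact hUd z hz)
    rw [Prod.mk.eta] at h
    simpa [pd₂, hUdef, hFqdef] using h
  have hnb1 : ∀ (t : Set (ℝ × ℝ)), IsOpen t → ∀ z ∈ t, {x : ℝ | (x, (z:ℝ×ℝ).2) ∈ t} ∈ 𝓝 z.1 := by
    intro t ht z hz
    have hc : ContinuousAt (fun x : ℝ => (x, z.2)) z.1 :=
      (continuous_id.prodMk continuous_const).continuousAt
    exact hc.preimage_mem_nhds (ht.mem_nhds (by simpa using hz))
  have hnb2 : ∀ (t : Set (ℝ × ℝ)), IsOpen t → ∀ z ∈ t, {y : ℝ | ((z:ℝ×ℝ).1, y) ∈ t} ∈ 𝓝 z.2 := by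
    intro t ht z hz
    have hc : ContinuousAt (fun y : ℝ => (z.1, y)) z.2 :=
      (continuous_const.prodMk continuous_id).continuousAt
    exact hc.preimage_mem_nhds (ht.mem_nhds (by simpa using hz))
  have hA : ∀ z ∈ s, pd₁ (pd₁ u) z.1 z.2 = fderiv ℝ Fp z (1, 0) := by
    intro z hz
    have hev : (fun x => pd₁ u x z.2) =ᶠ[𝓝 z.1] fun x => Fp (x, z.2) := by
      filter_upwards [hnb1 s hs z hz] with x hx
      exact hp1 (x, z.2) hx
    have h3 := derivSection1 (F := Fp) (a := z.1) (b := z.2)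
      (by rw [Prod.mk.eta]; exact hFpd z hz)
    rw [Prod.mk.eta] at h3
    calc pd₁ (pd₁ u) z.1 z.2 = deriv (fun x => pd₁ u x z.2) z.1 := rfl
      _ = deriv (fun x => Fp (x, z.2)) z.1 := hev.deriv_eq
      _ = fderiv ℝ Fp z (1, 0) := h3
  have hB1 : ∀ z ∈ s, pd₁ (pd₂ u) z.1 z.2 = fderiv ℝ Fq z (1, 0) := by
    intro z hz
    have hev : (fun x => pd₂ u x z.2) =ᶠ[𝓝 z.1] fun x => Fq (x, z.2) := by
      filter_upwards [hnb1 s hs z hz] with x hx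
      exact hp2 (x, z.2) hx
    have h3 := derivSection1 (F := Fq) (a := z.1) (b := z.2)
      (by rw [Prod.mk.eta]; exact hFqd z hz)
    rw [Prod.mk.eta] at h3
    calc pd₁ (pd₂ u) z.1 z.2 = deriv (fun x => pd₂ u x z.2) z.1 := rfl
      _ = deriv (fun x => Fq (x, z.2)) z.1 := hev.deriv_eq
      _ = fderiv ℝ Fq z (1, 0) := h3
  have hB2 : ∀ z ∈ s, pd₂ (pd₁ u) z.1 z.2 = fderiv ℝ Fp z (0, 1) := by
    intro z hz
    have hev : (fun y => pd₁ u z.1 y) =ᶠ[𝓝 z.2] fun y => Fp (z.1, y) := by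
      filter_upwards [hnb2 s hs z hz] with y hy
      exact hp1 (z.1, y) hy
    have h3 := derivSection2 (F := Fp) (a := z.1) (b := z.2)
      (by rw [Prod.mk.eta]; exact hFpd z hz)
    rw [Prod.mk.eta] at h3
    calc pd₂ (pd₁ u) z.1 z.2 = deriv (fun y => pd₁ u z.1 y) z.2 := rfl
      _ = deriv (fun y => Fp (z.1, y)) z.2 := hev.deriv_eq
      _ = fderiv ℝ Fp z (0, 1) := h3
  have hC : ∀ z ∈ s, pd₂ (pd₂ u) z.1 z.2 = fderiv ℝ Fq z (0, 1) := by
    intro z hz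
    have hev : (fun y => pd₂ u z.1 y) =ᶠ[𝓝 z.2] fun y => Fq (z.1, y) := by
      filter_upwards [hnb2 s hs z hz] with y hy
      exact hp2 (z.1, y) hy
    have h3 := derivSection2 (F := Fq) (a := z.1) (b := z.2)
      (by rw [Prod.mk.eta]; exact hFqd z hz)
    rw [Prod.mk.eta] at h3
    calc pd₂ (pd₂ u) z.1 z.2 = deriv (fun y => pd₂ u z.1 y) z.2 := rfl
      _ = deriv (fun y => Fq (z.1, y)) z.2 := hev.deriv_eq
      _ = fderiv ℝ Fq z (0, 1) := h3
  set Hc : (ℝ × ℝ) → ((ℝ × ℝ) →L[ℝ] (ℝ × ℝ)) :=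
    fun z => (fderiv ℝ Fp z).prod (fderiv ℝ Fq z) with hHcdef
  have hgev : ∀ z ∈ s, g =ᶠ[𝓝 z] fun z' => (Fp z', Fq z') := by
    intro z hz
    filter_upwards [hs.mem_nhds hz] with z' hz'
    rw [hg]
    exact Prod.ext (hp1 z' hz') (hp2 z' hz')
  have hgH : ∀ z ∈ s, HasFDerivAt g (Hc z) z := by
    intro z hz
    have h := ((hFpd z hz).hasFDerivAt.prodMk (hFqd z hz).hasFDerivAt)
    exact h.congr_of_eventuallyEq (hgev z hz)
  have hgcd : ∀ z ∈ s, ContDiffAt ℝ 1 g z := by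
    intro z hz
    exact ((hFpcd z hz).prodMk (hFqcd z hz)).congr_of_eventuallyEq (hgev z hz)
  have hHcapp : ∀ z v, Hc z v = (fderiv ℝ Fp z v, fderiv ℝ Fq z v) := by
    intro z v
    rw [hHcdef]
    rfl
  have hbij : ∀ z ∈ s, ∃ E : (ℝ × ℝ) ≃L[ℝ] (ℝ × ℝ),
      (E : (ℝ × ℝ) →L[ℝ] (ℝ × ℝ)) = Hc z := by
    intro z hz
    have hdet : fderiv ℝ Fp z (1,0) * fderiv ℝ Fq z (0,1)
        - fderiv ℝ Fp z (0,1) * fderiv ℝ Fq z (1,0) ≠ 0 := by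
      have h := hHess z hz
      rw [hA z hz, hB1 z hz, hB2 z hz, hC z hz] at h
      intro hcon
      exact h (by linarith [hcon])
    refine ⟨e2 (fderiv ℝ Fp z (1,0)) (fderiv ℝ Fp z (0,1))
      (fderiv ℝ Fq z (1,0)) (fderiv ℝ Fq z (0,1)) hdet, ?_⟩
    apply ContinuousLinearMap.ext
    intro v
    rw [ContinuousLinearEquiv.coe_coe, e2_apply, hHcapp,
      clm_eval (fderiv ℝ Fp z) v, clm_eval (fderiv ℝ Fq z) v]
    exact Prod.ext (by ring) (by ring)
  have hopen : IsOpen (g '' s) := by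
    rw [isOpen_iff_mem_nhds]
    rintro w ⟨z, hz, rfl⟩
    obtain ⟨E, hE⟩ := hbij z hz
    have hstrict : HasStrictFDerivAt g (E : (ℝ × ℝ) →L[ℝ] (ℝ × ℝ)) z :=
      (hgcd z hz).hasStrictFDerivAt' (hE ▸ hgH z hz) one_ne_zero
    have hmap : Filter.map g (𝓝 z) = 𝓝 (g z) := hstrict.map_nhds_eq_of_equiv
    rw [← hmap]
    exact Filter.image_mem_map (hs.mem_nhds hz)
  have hΦcd : ∀ w ∈ g '' s, ContDiffAt ℝ 2 Φ w := fun w hw => hφ.contDiffAt (hopen.mem_nhds hw)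
  have hΦd : ∀ w ∈ g '' s, DifferentiableAt ℝ Φ w := fun w hw =>
    (hΦcd w hw).differentiableAt (by norm_num)
  have hΦ1 : ∀ w ∈ g '' s, ContDiffAt ℝ 1 (fderiv ℝ Φ) w := fun w hw =>
    (hΦcd w hw).fderiv_right (by norm_num)
  have hgrad : ∀ z ∈ s, ∀ v : ℝ × ℝ, fderiv ℝ Φ (g z) v = z.1 * v.1 + z.2 * v.2 := by
    intro z hz v
    obtain ⟨E, hE⟩ := hbij z hz
    have hw : g z ∈ g '' s := ⟨z, hz, rfl⟩
    have hcomp : HasFDerivAt (Φ ∘ g) ((fderiv ℝ Φ (g z)).comp (Hc z)) z :=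
      (hΦd (g z) hw).hasFDerivAt.comp z (hgH z hz)
    have hevF : (Φ ∘ g) =ᶠ[𝓝 z] fun z' => z'.1 * Fp z' + z'.2 * Fq z' - U z' := by
      filter_upwards [hs.mem_nhds hz] with z' hz'
      have h1 : (Φ ∘ g) z' = φ (pd₁ u z'.1 z'.2) (pd₂ u z'.1 z'.2) := by
        simp only [Function.comp_apply, hg, hΦdef]
      rw [h1, hdef z' hz', hp1 z' hz', hp2 z' hz']
    have hT : HasFDerivAt (fun z' : ℝ × ℝ => z'.1 * Fp z' + z'.2 * Fq z' - U z')
        (((z.1 • fderiv ℝ Fp z + Fp z • ContinuousLinearMap.fst ℝ ℝ ℝ)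
          + (z.2 • fderiv ℝ Fq z + Fq z • ContinuousLinearMap.snd ℝ ℝ ℝ))
          - fderiv ℝ U z) z := by
      have h1 : HasFDerivAt (fun z' : ℝ × ℝ => z'.1 * Fp z')
          (z.1 • fderiv ℝ Fp z + Fp z • ContinuousLinearMap.fst ℝ ℝ ℝ) z :=
        hasFDerivAt_fst.mul (hFpd z hz).hasFDerivAt
      have h2 : HasFDerivAt (fun z' : ℝ × ℝ => z'.2 * Fq z')
          (z.2 • fderiv ℝ Fq z + Fq z • ContinuousLinearMap.snd ℝ ℝ ℝ) z :=
        hasFDerivAt_snd.mul (hFqd z hz).hasFDerivAt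
      exact (h1.add h2).sub (hUd z hz).hasFDerivAt
    have huniq : (fderiv ℝ Φ (g z)).comp (Hc z)
        = ((z.1 • fderiv ℝ Fp z + Fp z • ContinuousLinearMap.fst ℝ ℝ ℝ)
          + (z.2 • fderiv ℝ Fq z + Fq z • ContinuousLinearMap.snd ℝ ℝ ℝ))
          - fderiv ℝ U z :=
      (hcomp.congr_of_eventuallyEq hevF.symm).unique hT
    have h6 : Hc z (E.symm v) = v := by
      rw [← hE]; exact E.apply_symm_apply v
    have h7 : fderiv ℝ Fp z (E.symm v) = v.1 := by
      have := congrArg Prod.fst h6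
      rwa [hHcapp] at this
    have h8 : fderiv ℝ Fq z (E.symm v) = v.2 := by
      have := congrArg Prod.snd h6
      rwa [hHcapp] at this
    have hU' : fderiv ℝ U z (E.symm v) = (E.symm v).1 * Fp z + (E.symm v).2 * Fq z := by
      rw [hFpdef, hFqdef]
      exact clm_eval (fderiv ℝ U z) (E.symm v)
    calc fderiv ℝ Φ (g z) v = fderiv ℝ Φ (g z) (Hc z (E.symm v)) := by rw [h6]
      _ = ((fderiv ℝ Φ (g z)).comp (Hc z)) (E.symm v) := rfl
      _ = ((((z.1 • fderiv ℝ Fp z + Fp z • ContinuousLinearMap.fst ℝ ℝ ℝ)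
          + (z.2 • fderiv ℝ Fq z + Fq z • ContinuousLinearMap.snd ℝ ℝ ℝ))
          - fderiv ℝ U z) : (ℝ × ℝ) →L[ℝ] ℝ) (E.symm v) := by rw [huniq]
      _ = z.1 * fderiv ℝ Fp z (E.symm v) + Fp z * (E.symm v).1
          + (z.2 * fderiv ℝ Fq z (E.symm v) + Fq z * (E.symm v).2)
          - fderiv ℝ U z (E.symm v) := by
        simp [ContinuousLinearMap.sub_apply, ContinuousLinearMap.add_apply,
          ContinuousLinearMap.smul_apply, smul_eq_mul]
      _ = z.1 * v.1 + z.2 * v.2 := by rw [h7, h8, hU']; ring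
  set Gp : ℝ × ℝ → ℝ := fun w => fderiv ℝ Φ w (1, 0) with hGpdef
  set Gq : ℝ × ℝ → ℝ := fun w => fderiv ℝ Φ w (0, 1) with hGqdef
  have hGpcd : ∀ w ∈ g '' s, ContDiffAt ℝ 1 Gp w := by
    intro w hw
    have := ((ContinuousLinearMap.apply ℝ ℝ ((1:ℝ),(0:ℝ))).contDiff.contDiffAt).comp w
      (hΦ1 w hw)
    exact this.congr_of_eventuallyEq (Filter.Eventually.of_forall fun w => rfl)
  have hGqcd : ∀ w ∈ g '' s, ContDiffAt ℝ 1 Gq w := by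
    intro w hw
    have := ((ContinuousLinearMap.apply ℝ ℝ ((0:ℝ),(1:ℝ))).contDiff.contDiffAt).comp w
      (hΦ1 w hw)
    exact this.congr_of_eventuallyEq (Filter.Eventually.of_forall fun w => rfl)
  have hGpd : ∀ w ∈ g '' s, DifferentiableAt ℝ Gp w := fun w hw =>
    (hGpcd w hw).differentiableAt one_ne_zero
  have hGqd : ∀ w ∈ g '' s, DifferentiableAt ℝ Gq w := fun w hw =>
    (hGqcd w hw).differentiableAt one_ne_zero
  have hq1 : ∀ w ∈ g '' s, pd₁ φ w.1 w.2 = Gp w := by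
    intro w hw
    have h := derivSection1 (F := Φ) (a := w.1) (b := w.2)
      (by rw [Prod.mk.eta]; exact hΦd w hw)
    rw [Prod.mk.eta] at h
    simpa [pd₁, hΦdef, hGpdef] using h
  have hq2 : ∀ w ∈ g '' s, pd₂ φ w.1 w.2 = Gq w := by
    intro w hw
    have h := derivSection2 (F := Φ) (a := w.1) (b := w.2)
      (by rw [Prod.mk.eta]; exact hΦd w hw)
    rw [Prod.mk.eta] at h
    simpa [pd₂, hΦdef, hGqdef] using h
  have hQ11 : ∀ w ∈ g '' s, pd₁ (pd₁ φ) w.1 w.2 = fderiv ℝ Gp w (1, 0) := by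
    intro w hw
    have hev : (fun x => pd₁ φ x w.2) =ᶠ[𝓝 w.1] fun x => Gp (x, w.2) := by
      filter_upwards [hnb1 (g '' s) hopen w hw] with x hx
      exact hq1 (x, w.2) hx
    have h3 := derivSection1 (F := Gp) (a := w.1) (b := w.2)
      (by rw [Prod.mk.eta]; exact hGpd w hw)
    rw [Prod.mk.eta] at h3
    calc pd₁ (pd₁ φ) w.1 w.2 = deriv (fun x => pd₁ φ x w.2) w.1 := rfl
      _ = deriv (fun x => Gp (x, w.2)) w.1 := hev.deriv_eq
      _ = fderiv ℝ Gp w (1, 0) := h3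
  have hQ21 : ∀ w ∈ g '' s, pd₁ (pd₂ φ) w.1 w.2 = fderiv ℝ Gq w (1, 0) := by
    intro w hw
    have hev : (fun x => pd₂ φ x w.2) =ᶠ[𝓝 w.1] fun x => Gq (x, w.2) := by
      filter_upwards [hnb1 (g '' s) hopen w hw] with x hx
      exact hq2 (x, w.2) hx
    have h3 := derivSection1 (F := Gq) (a := w.1) (b := w.2)
      (by rw [Prod.mk.eta]; exact hGqd w hw)
    rw [Prod.mk.eta] at h3
    calc pd₁ (pd₂ φ) w.1 w.2 = deriv (fun x => pd₂ φ x w.2) w.1 := rfl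
      _ = deriv (fun x => Gq (x, w.2)) w.1 := hev.deriv_eq
      _ = fderiv ℝ Gq w (1, 0) := h3
  have hQ22 : ∀ w ∈ g '' s, pd₂ (pd₂ φ) w.1 w.2 = fderiv ℝ Gq w (0, 1) := by
    intro w hw
    have hev : (fun y => pd₂ φ w.1 y) =ᶠ[𝓝 w.2] fun y => Gq (w.1, y) := by
      filter_upwards [hnb2 (g '' s) hopen w hw] with y hy
      exact hq2 (w.1, y) hy
    have h3 := derivSection2 (F := Gq) (a := w.1) (b := w.2)
      (by rw [Prod.mk.eta]; exact hGqd w hw)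
    rw [Prod.mk.eta] at h3
    calc pd₂ (pd₂ φ) w.1 w.2 = deriv (fun y => pd₂ φ w.1 y) w.2 := rfl
      _ = deriv (fun y => Gq (w.1, y)) w.2 := hev.deriv_eq
      _ = fderiv ℝ Gq w (0, 1) := h3
  have hGid : ∀ z ∈ s, (Gp (g z), Gq (g z)) = z := by
    intro z hz
    have h1 := hgrad z hz (1, 0)
    have h2 := hgrad z hz (0, 1)
    simp only [mul_one, mul_zero, add_zero, zero_add] at h1 h2
    rw [hGpdef, hGqdef]
    exact Prod.ext h1 h2
  -- final computation
  rintro w ⟨z, hz, rfl⟩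
  have hw : g z ∈ g '' s := ⟨z, hz, rfl⟩
  have hgz1 : (g z).1 = Fp z := by rw [hg]; exact hp1 z hz
  have hgz2 : (g z).2 = Fq z := by rw [hg]; exact hp2 z hz
  set M : (ℝ × ℝ) →L[ℝ] (ℝ × ℝ) := (fderiv ℝ Gp (g z)).prod (fderiv ℝ Gq (g z)) with hMdef
  have hGH : HasFDerivAt (fun w => (Gp w, Gq w)) M (g z) :=
    (hGpd _ hw).hasFDerivAt.prodMk (hGqd _ hw).hasFDerivAt
  have hchain : HasFDerivAt ((fun w => (Gp w, Gq w)) ∘ g) (M.comp (Hc z)) z :=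
    hGH.comp z (hgH z hz)
  have hidev : ((fun w => (Gp w, Gq w)) ∘ g) =ᶠ[𝓝 z] id := by
    filter_upwards [hs.mem_nhds hz] with z' hz'
    simp only [Function.comp_apply, id_eq]
    exact hGid z' hz'
  have huniq2 : M.comp (Hc z) = ContinuousLinearMap.id ℝ (ℝ × ℝ) :=
    (hchain.congr_of_eventuallyEq hidev.symm).unique (hasFDerivAt_id z)
  have hMH : ∀ v : ℝ × ℝ, M (Hc z v) = v := by
    intro v
    have h := congrArg (fun L : (ℝ × ℝ) →L[ℝ] (ℝ × ℝ) => L v) huniq2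
    simpa using h
  have hMapp : ∀ v : ℝ × ℝ, M v = (fderiv ℝ Gp (g z) v, fderiv ℝ Gq (g z) v) := by
    intro v
    rw [hMdef]
    rfl
  have hM1 : ∀ v : ℝ × ℝ, fderiv ℝ Gp (g z) v
      = v.1 * fderiv ℝ Gp (g z) (1,0) + v.2 * fderiv ℝ Gp (g z) (0,1) :=
    fun v => clm_eval _ v
  have hM2 : ∀ v : ℝ × ℝ, fderiv ℝ Gq (g z) v
      = v.1 * fderiv ℝ Gq (g z) (1,0) + v.2 * fderiv ℝ Gq (g z) (0,1) :=
    fun v => clm_eval _ v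
  have k1 := hMH (1, 0)
  have k2 := hMH (0, 1)
  rw [hHcapp] at k1 k2
  rw [hMapp] at k1 k2
  rw [hM1, hM2] at k1 k2
  have E1 := congrArg Prod.fst k1
  have E2 := congrArg Prod.snd k1
  have E3 := congrArg Prod.fst k2
  have E4 := congrArg Prod.snd k2
  simp only [] at E1 E2 E3 E4
  -- abbreviations
  set A : ℝ := fderiv ℝ Fp z (1, 0) with hAdef
  set B1v : ℝ := fderiv ℝ Fq z (1, 0) with hB1def
  set B2v : ℝ := fderiv ℝ Fp z (0, 1) with hB2def
  set Cv : ℝ := fderiv ℝ Fq z (0, 1) with hCdef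
  set a11 : ℝ := fderiv ℝ Gp (g z) (1, 0) with ha11
  set a12 : ℝ := fderiv ℝ Gp (g z) (0, 1) with ha12
  set a21 : ℝ := fderiv ℝ Gq (g z) (1, 0) with ha21
  set a22 : ℝ := fderiv ℝ Gq (g z) (0, 1) with ha22
  set p : ℝ := Fp z with hpdef
  set q : ℝ := Fq z with hqdef
  have hdet : A * Cv - B1v * B2v ≠ 0 := by
    have h := hHess z hz
    rwa [hA z hz, hB1 z hz, hB2 z hz, hC z hz] at h
  have hPDE' : (1 + q ^ 2) * A - 2 * p * q * B1v + (1 + p ^ 2) * Cv = 0 := by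
    have h := hPDE z hz
    rwa [hp1 z hz, hp2 z hz, hA z hz, hB1 z hz, hC z hz] at h
  rw [hQ11 (g z) hw, hQ21 (g z) hw, hQ22 (g z) hw, hgz1, hgz2]
  -- now E1 : A * a11 + B1v * a12 = 1, E2 : A * a21 + B1v * a22 = 0,
  -- E3 : B2v * a11 + Cv * a12 = 0, E4 : B2v * a21 + Cv * a22 = 1
  have h11 : (A * Cv - B1v * B2v) * a11 = Cv := by linear_combination Cv * E1 - B1v * E3
  have h21 : (A * Cv - B1v * B2v) * a21 = -B1v := by linear_combination Cv * E2 - B1v * E4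
  have h22 : (A * Cv - B1v * B2v) * a22 = A := by linear_combination A * E4 - B2v * E2
  have hinner : (1 + p ^ 2) * a11 + 2 * p * q * a21 + (1 + q ^ 2) * a22 = 0 := by
    have hz0 : (A * Cv - B1v * B2v)
        * ((1 + p ^ 2) * a11 + 2 * p * q * a21 + (1 + q ^ 2) * a22) = 0 := by
      linear_combination (1 + p ^ 2) * h11 + 2 * p * q * h21 + (1 + q ^ 2) * h22 + hPDE'
    exact (mul_eq_zero.mp hz0).resolve_left hdet
  linear_combination hinner
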